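/- Let P(x) = a₋₁x⁻¹ + a₀ + a₁x with integer coefficients, a_n = ct[P(x)^n], and p a prime not dividing a_n for any n. Then for every n there exists n' with n < n' and n' − n < p^{p^{p−1} + p + 1} such that a_n ≡ a_{n'} (mod p). -/

import Mathlib

open LaurentPolynomial

/-- The constant term of an integer Laurent polynomial. -/
noncomputable def ct (Q : LaurentPolynomial ℤ) : ℤ := Q.coeff 0

/-- The Laurent trinomial `a₋₁ x⁻¹ + a₀ + a₁ x`. -/
noncomputable def Ptri (am1 a0 a1 : ℤ) : LaurentPolynomial ℤ :=
  C am1 * T (-1) + C a0 + C a1 * T 1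

noncomputable def fpoly (am1 a0 a1 : ℤ) : Polynomial ℤ :=
  Polynomial.C am1 + Polynomial.C a0 * Polynomial.X + Polynomial.C a1 * Polynomial.X ^ 2

lemma Ptri_eq (am1 a0 a1 : ℤ) :
    Ptri am1 a0 a1 = (fpoly am1 a0 a1).toLaurent * T (-1) := by
  rw [fpoly, Ptri]
  simp only [map_add, map_mul, Polynomial.toLaurent_C, Polynomial.toLaurent_X,
    Polynomial.toLaurent_X_pow]
  ring_nf
  rw [mul_comm (T (-1)) (C a0), mul_comm (T (-1)) (C a1), mul_assoc (C a0), mul_assoc (C a1),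
    ← T_add, ← T_add]
  norm_num

lemma ct_eq (am1 a0 a1 : ℤ) (n : ℕ) :
    ct ((Ptri am1 a0 a1) ^ n) = ((fpoly am1 a0 a1) ^ n).coeff n := by
  rw [ct, Ptri_eq, mul_pow, ← map_pow, T_pow, T, AddMonoidAlgebra.coeff_mul_single_apply]
  simp [Polynomial.toLaurent_apply, Finsupp.mapDomain_apply Nat.cast_injective]
  rw [← Polynomial.toFinsupp_pow]
  rfl

section KeyLemmas
open Polynomial

lemma key (p : ℕ) [Fact p.Prime] (g : Polynomial (ZMod p)) (hg : g.natDegree ≤ 2)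
    (q r : ℕ) (hr : r < p) :
    (g ^ (p * q + r)).coeff (p * q + r) = (g ^ q).coeff q * (g ^ r).coeff r := by
  have hp : 0 < p := (Fact.out : p.Prime).pos
  have hgp : g ^ p = expand (ZMod p) p g := by
    have := Polynomial.map_frobenius_expand p g
    rw [ZMod.frobenius_zmod, Polynomial.map_id] at this
    exact this.symm
  have h1 : g ^ (p * q + r) = expand (ZMod p) p (g ^ q) * g ^ r := by
    rw [pow_add, pow_mul, hgp, ← map_pow]
  rw [h1, coeff_mul]
  rw [Finset.sum_eq_single (p * q, r)]
  · rw [coeff_expand hp]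
    simp [Nat.mul_div_cancel_left q hp]
  · rintro ⟨i, j⟩ hij hne
    rw [Finset.HasAntidiagonal.mem_antidiagonal] at hij
    rw [coeff_expand hp]
    by_cases hdvd : p ∣ i
    · simp only [hdvd, if_true]
      obtain ⟨k, rfl⟩ := hdvd
      -- i = p * k; if k > q then i > p*q + r; so k ≤ q; if k = q then j = r contradiction; else j > 2r
      have hkq : k ≤ q := by
        by_contra h
        push_neg at h
        have h2 : p * (q + 1) ≤ p * k := Nat.mul_le_mul_left p h
        have h3 : p * (q + 1) = p * q + p := by ring
        omega
      have hkq' : k < q := by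
        rcases Nat.lt_or_ge k q with h | h
        · exact h
        · exfalso; apply hne
          have : k = q := le_antisymm hkq h
          subst this
          exact Prod.ext rfl (Nat.add_left_cancel hij)
      have hj : 2 * r < j := by
        have h4 : p * k + p ≤ p * q := by
          have h5 := Nat.succ_le_of_lt hkq'
          calc p * k + p = p * (k + 1) := by ring
            _ ≤ p * q := Nat.mul_le_mul_left p h5
        omega
      have : (g ^ r).natDegree < j := by
        have : (g ^ r).natDegree ≤ 2 * r := by
          calc (g ^ r).natDegree ≤ r * g.natDegree := natDegree_pow_le
            _ ≤ r * 2 := Nat.mul_le_mul_left r hg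
            _ = 2 * r := by ring
        omega
      rw [coeff_eq_zero_of_natDegree_lt this, mul_zero]
    · simp [hdvd]
  · intro h
    exfalso
    exact h (Finset.HasAntidiagonal.mem_antidiagonal.mpr rfl)

end KeyLemmas

-- A applied to (m * p^len + ofDigits) = A m * product of digit values
lemma ofdig (p : ℕ) (A : ℕ → ZMod p)
    (hmul : ∀ q r : ℕ, r < p → A (p * q + r) = A q * A r) :
    ∀ (l : List ℕ), (∀ d ∈ l, d < p) → ∀ m : ℕ,
      A (m * p ^ l.length + Nat.ofDigits p l) = A m * (l.map A).prod := by
  intro l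
  induction l with
  | nil => intro _ m; simp
  | cons d tl ih =>
    intro hl m
    have hd : d < p := hl d List.mem_cons_self
    have htl : ∀ x ∈ tl, x < p := fun x hx => hl x (List.mem_cons_of_mem d hx)
    have harith : m * p ^ (d :: tl).length + Nat.ofDigits p (d :: tl)
        = p * (m * p ^ tl.length + Nat.ofDigits p tl) + d := by
      rw [Nat.ofDigits_cons, List.length_cons]
      ring
    rw [harith, hmul _ d hd, ih htl m]
    simp [mul_assoc, mul_comm, mul_left_comm]

-- every A n is a product of digit values
lemma digit_prod (p : ℕ) (hp : 1 < p) (A : ℕ → ZMod p)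
    (hmul : ∀ q r : ℕ, r < p → A (p * q + r) = A q * A r) (n : ℕ) :
    ∃ l : List ℕ, (∀ d ∈ l, d < p) ∧ (l.map A).prod = A n := by
  induction n using Nat.strong_induction_on with
  | _ n ih =>
    rcases Nat.lt_or_ge n p with h | h
    · exact ⟨[n], by simpa using h, by simp⟩
    · have hq : n / p < n := Nat.div_lt_self (by omega) hp
      obtain ⟨l, hl, hprod⟩ := ih (n / p) hq
      refine ⟨n % p :: l, ?_, ?_⟩
      · intro d hd
        rcases List.mem_cons.mp hd with rfl | hd
        · exact Nat.mod_lt _ (by omega)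
        · exact hl d hd
      · have : A n = A (n / p) * A (n % p) := by
          conv_lhs => rw [← Nat.div_add_mod n p]
          exact hmul (n / p) (n % p) (Nat.mod_lt _ (by omega))
        simp [this, hprod, mul_comm]

-- helper: product over flatMap of replicates
lemma flat_prod (p : ℕ) (A : ℕ → ZMod p) (e : ℕ → ℕ) : ∀ L : List ℕ,
    ((L.flatMap (fun d => List.replicate (e d) d)).map A).prod
      = (L.map (fun d => A d ^ e d)).prod := by
  intro L
  induction L with
  | nil => simp
  | cons a tl ih =>
    rw [List.flatMap_cons, List.map_append, List.prod_append, ih, List.map_replicate,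
      List.prod_replicate, List.map_cons, List.prod_cons]

-- reduce list length to ≤ p * (p - 2)
lemma list_red (p : ℕ) [Fact p.Prime] (A : ℕ → ZMod p) (hA : ∀ d, A d ≠ 0)
    (l : List ℕ) (hl : ∀ d ∈ l, d < p) :
    ∃ l' : List ℕ, (∀ d ∈ l', d < p) ∧ l'.length ≤ p * (p - 2) ∧
      (l'.map A).prod = (l.map A).prod := by
  classical
  have hp : 1 < p := (Fact.out : p.Prime).one_lt
  refine ⟨(List.range p).flatMap (fun d => List.replicate (l.count d % (p - 1)) d), ?_, ?_, ?_⟩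
  · intro d hd
    obtain ⟨x, hx, hd⟩ := List.mem_flatMap.mp hd
    rw [List.eq_of_mem_replicate hd]
    exact List.mem_range.mp hx
  · rw [List.length_flatMap]
    have hb : ∀ d : ℕ, (List.replicate (l.count d % (p - 1)) d).length ≤ p - 2 := by
      intro d
      rw [List.length_replicate]
      have := Nat.mod_lt (l.count d) (show 0 < p - 1 by omega)
      omega
    calc ((List.range p).map fun d => (List.replicate (l.count d % (p - 1)) d).length).sum
        ≤ ((List.range p).map fun _ => p - 2).sum := by
          apply List.sum_le_sum
          intro d _; exact hb d
      _ = p * (p - 2) := by simp [List.map_const', mul_comm]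
  · rw [flat_prod]
    have hpow : ∀ d : ℕ, (A d) ^ (l.count d % (p - 1)) = (A d) ^ (l.count d) := by
      intro d
      have hAd : (A d) ^ (p - 1) = 1 := ZMod.pow_card_sub_one_eq_one (hA d)
      conv_rhs => rw [← Nat.div_add_mod (l.count d) (p - 1)]
      rw [pow_add, pow_mul, hAd, one_pow, one_mul]
    have h1 : ((List.range p).map (fun d => A d ^ (l.count d % (p - 1)))).prod
        = ∏ d ∈ Finset.range p, A d ^ (l.count d % (p - 1)) := by
      rfl
    rw [h1]
    simp_rw [hpow]
    rw [Finset.prod_list_map_count]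
    symm
    apply Finset.prod_subset
    · intro d hd
      rw [List.mem_toFinset] at hd
      exact Finset.mem_range.mpr (hl d hd)
    · intro d _ hd
      rw [List.mem_toFinset] at hd
      rw [List.count_eq_zero_of_not_mem hd, pow_zero]


lemma arith1 (n P c : ℕ) (hpos : 0 < P) : n < (n / P + 1) * P + c := by
  have hdm := Nat.div_add_mod n P
  have hmlt : n % P < P := Nat.mod_lt _ hpos
  have h : (n / P + 1) * P = P * (n / P) + P := by ring
  omega

lemma arith2 (n P c : ℕ) (hpos : 0 < P) (hc : c < P) :
    (n / P + 1) * P + c - n < 2 * P := by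
  have hdm := Nat.div_add_mod n P
  have hmlt : n % P < P := Nat.mod_lt _ hpos
  have h : (n / P + 1) * P = P * (n / P) + P := by ring
  omega

theorem stmt_15 (am1 a0 a1 : ℤ) (p : ℕ) (hp : p.Prime)
    (hndvd : ∀ n : ℕ, ¬ (p : ℤ) ∣ ct ((Ptri am1 a0 a1) ^ n)) (n : ℕ) :
    ∃ n' : ℕ, n < n' ∧ n' - n < p ^ (p ^ (p - 1) + p + 1) ∧
      ct ((Ptri am1 a0 a1) ^ n) ≡ ct ((Ptri am1 a0 a1) ^ n') [ZMOD (p : ℤ)] := by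
  haveI : Fact p.Prime := ⟨hp⟩
  have hp1 : 1 < p := hp.one_lt
  set A : ℕ → ZMod p :=
    fun m => (((fpoly am1 a0 a1).map (Int.castRingHom (ZMod p))) ^ m).coeff m with hA'
  -- cast identity
  have hcast : ∀ m : ℕ, ((ct ((Ptri am1 a0 a1) ^ m) : ℤ) : ZMod p) = A m := by
    intro m
    have hm : (((fpoly am1 a0 a1 ^ m).coeff m : ℤ) : ZMod p)
        = (((fpoly am1 a0 a1).map (Int.castRingHom (ZMod p))) ^ m).coeff m := by
      rw [← Polynomial.map_pow, Polynomial.coeff_map]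
      rfl
    rw [ct_eq]
    exact hm
  -- degree bound
  have hdeg : ((fpoly am1 a0 a1).map (Int.castRingHom (ZMod p))).natDegree ≤ 2 := by
    refine le_trans Polynomial.natDegree_map_le ?_
    unfold fpoly
    compute_degree
  -- multiplicativity
  have hmul : ∀ q r : ℕ, r < p → A (p * q + r) = A q * A r := fun q r hr =>
    key p _ hdeg q r hr
  -- nonvanishing
  have hA : ∀ m : ℕ, A m ≠ 0 := by
    intro m hzero
    apply hndvd m
    rw [← ZMod.intCast_zmod_eq_zero_iff_dvd, hcast m]
    exact hzero
  have hA0 : A 0 = 1 := by simp [hA']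
  -- the construction
  set len := p * (p - 2) with hlen
  -- digit lists for A n and A (n / p ^ len + 1)
  obtain ⟨l1, hl1, hprod1⟩ := digit_prod p hp1 A hmul n
  obtain ⟨l2, hl2, hprod2⟩ := digit_prod p hp1 A hmul (n / p ^ len + 1)
  set L : List ℕ := l1 ++ (List.replicate (p - 2) l2).flatten with hL
  have hLdig : ∀ d ∈ L, d < p := by
    intro d hd
    rcases List.mem_append.mp hd with h | h
    · exact hl1 d h
    · obtain ⟨x, hx, hdx⟩ := List.mem_flatten.mp h
      rw [List.eq_of_mem_replicate hx] at hdx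
      exact hl2 d hdx
  have hLprod : (L.map A).prod = A n * (A (n / p ^ len + 1)) ^ (p - 2) := by
    rw [hL, List.map_append, List.prod_append, hprod1]
    congr 1
    rw [List.map_flatten, List.prod_flatten, List.map_map, List.map_replicate]
    simp [hprod2, List.prod_replicate]
  obtain ⟨l', hl'dig, hl'len, hl'prod⟩ := list_red p A hA L hLdig
  set l'' : List ℕ := l' ++ List.replicate (len - l'.length) 0 with hl''
  have hl''len : l''.length = len := by
    rw [hl'', List.length_append, List.length_replicate]
    omega
  have hl''dig : ∀ d ∈ l'', d < p := by
    intro d hd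
    rcases List.mem_append.mp hd with h | h
    · exact hl'dig d h
    · rw [List.eq_of_mem_replicate h]; omega
  have hl''prod : (l''.map A).prod = A n * (A (n / p ^ len + 1)) ^ (p - 2) := by
    rw [hl'', List.map_append, List.prod_append, hl'prod, hLprod, List.map_replicate,
      List.prod_replicate, hA0, one_pow, mul_one]
  have hclt : Nat.ofDigits p l'' < p ^ len := by
    conv_rhs => rw [← hl''len]
    exact Nat.ofDigits_lt_base_pow_length hp1 hl''dig
  have hpos : 0 < p ^ len := Nat.pow_pos (by omega)
  have hq1 : (n / p ^ len + 1) * p ^ len = p ^ len * (n / p ^ len) + p ^ len := by ring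
  have hdm : p ^ len * (n / p ^ len) + n % p ^ len = n := Nat.div_add_mod n (p ^ len)
  have hmlt : n % p ^ len < p ^ len := Nat.mod_lt _ hpos
  refine ⟨(n / p ^ len + 1) * p ^ len + Nat.ofDigits p l'', arith1 n _ _ hpos, ?_, ?_⟩
  · -- bound
    have h6 : 2 * p ^ len ≤ p ^ (len + 1) := by
      rw [pow_succ, mul_comm]
      exact Nat.mul_le_mul_left _ (by omega)
    have h7 : len + 1 ≤ p ^ (p - 1) + p + 1 := by
      have hsq : p * (p - 2) ≤ p ^ 2 := by
        rw [pow_two]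
        exact Nat.mul_le_mul_left p (by omega)
      rcases Nat.lt_or_ge p 3 with h | h
      · have hp2 : p = 2 := by omega
        subst hp2
        norm_num
      · have hpow : p ^ 2 ≤ p ^ (p - 1) := Nat.pow_le_pow_right (by omega) (by omega)
        omega
    have h8 : p ^ (len + 1) ≤ p ^ (p ^ (p - 1) + p + 1) := Nat.pow_le_pow_right (by omega) h7
    calc (n / p ^ len + 1) * p ^ len + Nat.ofDigits p l'' - n
        < 2 * p ^ len := arith2 n _ _ hpos hclt
      _ ≤ p ^ (len + 1) := h6
      _ ≤ p ^ (p ^ (p - 1) + p + 1) := h8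
  · -- congruence
    rw [← ZMod.intCast_eq_intCast_iff, hcast, hcast]
    have hof := ofdig p A hmul l'' hl''dig (n / p ^ len + 1)
    rw [hl''len] at hof
    rw [hof, hl''prod]
    have hone : (A (n / p ^ len + 1)) ^ (p - 1) = 1 :=
      ZMod.pow_card_sub_one_eq_one (hA (n / p ^ len + 1))
    have hcomm : A (n / p ^ len + 1) * (A n * A (n / p ^ len + 1) ^ (p - 2))
        = A n * (A (n / p ^ len + 1) * A (n / p ^ len + 1) ^ (p - 2)) := by ring
    rw [hcomm, ← pow_succ']
    have hps : p - 2 + 1 = p - 1 := by omega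
    rw [hps, hone, mul_one]
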